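/- Let B be the symmetric ℝ/ℤ-valued pairing on A = (ℤ/4) × (ℤ/4) given by B((n₁,n₂),(m₁,m₂)) = (n₁m₂ + n₂m₁)/4 (mod 1). For every quadratic refinement Q of B with Q(0) = 0, the Gauss sum G(Q) is nonzero and the Arf invariant of Q is a multiple of 1/4, i.e., lies in {0, 1/4, 1/2, 3/4} ⊂ ℝ/ℤ. -/

import Mathlib

open scoped BigOperators

/-- The representative in `[0,1)` of an element of `ℝ/ℤ`. -/
noncomputable def rep (x : AddCircle (1 : ℝ)) : ℝ :=
  (AddCircle.equivIco (1 : ℝ) 0 x).1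

/-- The Gauss sum `G(Q) = Σ_{a ∈ A} exp(2πi·Q̃(a))` of an `ℝ/ℤ`-valued function `Q`
on a finite type, where `Q̃(a) ∈ [0,1)` is the representative of `Q(a)`. -/
noncomputable def gaussSumQ {A : Type*} [Fintype A] (Q : A → AddCircle (1 : ℝ)) : ℂ :=
  ∑ a, Complex.exp (2 * (Real.pi : ℂ) * Complex.I * (rep (Q a) : ℂ))

/-- The Arf invariant `(1/2π)·arg G(Q) ∈ ℝ/ℤ` of `Q` (meaningful when `G(Q) ≠ 0`). -/
noncomputable def arf {A : Type*} [Fintype A] (Q : A → AddCircle (1 : ℝ)) :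
    AddCircle (1 : ℝ) :=
  ((Complex.arg (gaussSumQ Q) / (2 * Real.pi) : ℝ) : AddCircle (1 : ℝ))

/-- The torsion linking pairing on `(ℤ/4) × (ℤ/4)`:
`B((n₁,n₂),(m₁,m₂)) = (n₁m₂ + n₂m₁)/4 (mod 1)`. -/
noncomputable def Bpair (v w : ZMod 4 × ZMod 4) : AddCircle (1 : ℝ) :=
  ((((v.1.val * w.2.val + v.2.val * w.1.val : ℕ) : ℝ) / 4 : ℝ) : AddCircle (1 : ℝ))

set_option maxHeartbeats 1000000

/- auxiliary -/
noncomputable def ee (t : ℝ) : ℂ := Complex.exp (2 * (Real.pi : ℂ) * Complex.I * t)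

lemma rep_coe (x : AddCircle (1:ℝ)) : ((rep x : ℝ) : AddCircle (1:ℝ)) = x :=
  (AddCircle.equivIco 1 0).symm_apply_apply x

lemma coe_add' (a b : ℝ) : ((a+b:ℝ) : AddCircle (1:ℝ)) = ↑a + ↑b := rfl

lemma ee_int (n : ℤ) : ee n = 1 := by
  unfold ee
  rw [show 2 * (Real.pi:ℂ) * Complex.I * (n:ℝ) = (n:ℂ) * (2*(Real.pi:ℂ)*Complex.I) by
    push_cast; ring]
  exact Complex.exp_int_mul_two_pi_mul_I n

lemma ee_add (s t : ℝ) : ee (s+t) = ee s * ee t := by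
  unfold ee; rw [← Complex.exp_add]; push_cast; ring_nf

lemma ee_congr {s t : ℝ} (h : (s : AddCircle (1:ℝ)) = (t : AddCircle (1:ℝ))) :
    ee s = ee t := by
  have h2 : ((s - t : ℝ) : AddCircle (1:ℝ)) = 0 := by
    rw [show ((s-t:ℝ):AddCircle (1:ℝ)) = (s:AddCircle (1:ℝ)) - t from rfl, h, sub_self]
  obtain ⟨n, hn⟩ := (AddCircle.coe_eq_zero_iff 1).mp h2
  have hn' : (n:ℝ) = s - t := by simpa using hn
  have : s = t + n := by linarith
  rw [this, ee_add, ee_int, mul_one]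

lemma ee_quarter (n : ℕ) : ee ((n:ℝ)/4) = Complex.I ^ n := by
  unfold ee
  have hI : Complex.exp (((Real.pi/2 : ℝ):ℂ) * Complex.I) = Complex.I := by
    rw [Complex.exp_mul_I, ← Complex.ofReal_cos, ← Complex.ofReal_sin,
      Real.cos_pi_div_two, Real.sin_pi_div_two]
    simp
  rw [show 2 * (Real.pi:ℂ) * Complex.I * (((n:ℝ)/4 : ℝ):ℂ)
      = (n:ℂ) * (((Real.pi/2 : ℝ):ℂ) * Complex.I) by push_cast; ring,
    Complex.exp_nat_mul, hI]

lemma I_pow_four : Complex.I ^ 4 = 1 := by norm_num [pow_succ]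

lemma I_pow_mod (k : ℕ) : Complex.I ^ k = Complex.I ^ (k % 4) := by
  conv_lhs => rw [← Nat.div_add_mod k 4]
  rw [pow_add, pow_mul, I_pow_four, one_pow, one_mul]

lemma I_cubed : Complex.I ^ 3 = -Complex.I := by
  rw [pow_succ, Complex.I_sq]; ring

lemma gauss_eval (α β : ℕ) (hα : α < 4) (hβ : β < 4) :
    (∑ v : ZMod 4 × ZMod 4,
      Complex.I ^ ((v.1.val*α + v.2.val*β + v.1.val*v.2.val) % 4))
      = 4 * Complex.I ^ (((4-α)%4*β)%4) := by
  have expand : ∀ g : ZMod 4 × ZMod 4 → ℂ,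
      ∑ v, g v = ∑ x : ZMod 4, ∑ y : ZMod 4, g (x,y) := fun g => Fintype.sum_prod_type g
  have zsum : ∀ g : ZMod 4 → ℂ, ∑ x, g x = g 0 + g 1 + g 2 + g 3 :=
    fun g => Fin.sum_univ_four g
  interval_cases α <;> interval_cases β <;>
    simp only [expand, zsum] <;>
    norm_num [show ((0:ZMod 4)).val = 0 from rfl, show ((1:ZMod 4)).val = 1 from rfl,
      show ((2:ZMod 4)).val = 2 from rfl, show ((3:ZMod 4)).val = 3 from rfl,
      Complex.I_sq, I_cubed] <;> ring

/-- For every quadratic refinement `Q` of the pairing `B` on `(ℤ/4) × (ℤ/4)` with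
`Q(0) = 0`, the Gauss sum is nonzero and the Arf invariant is a multiple of `1/4`,
i.e. lies in `{0, 1/4, 1/2, 3/4} ⊂ ℝ/ℤ`. -/
theorem arf_multiple_of_quarter_Q4 :
    ∀ Q : ZMod 4 × ZMod 4 → AddCircle (1 : ℝ),
      (∀ v w, Q (v + w) - Q v - Q w + Q 0 = Bpair v w) →
      Q 0 = 0 →
      gaussSumQ Q ≠ 0 ∧
      arf Q ∈ ({((0 : ℝ) : AddCircle (1 : ℝ)), ((1/4 : ℝ) : AddCircle (1 : ℝ)),
        ((1/2 : ℝ) : AddCircle (1 : ℝ)), ((3/4 : ℝ) : AddCircle (1 : ℝ))} :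
          Set (AddCircle (1 : ℝ))) := by
  intro Q hQ hQ0
  have hadd : ∀ v w, Q (v + w) = Q v + Q w + Bpair v w := by
    intro v w
    have h := hQ v w
    rw [hQ0, add_zero, sub_sub, sub_eq_iff_eq_add] at h
    rw [h]; abel
  -- extracting quarter values
  have quarter : ∀ x : AddCircle (1:ℝ), x + x + (x + x) = 0 →
      ∃ k : ℕ, k < 4 ∧ x = (((k:ℝ)/4 : ℝ) : AddCircle (1:ℝ)) := by
    intro x hx
    have hr := rep_coe x
    have hmem : rep x ∈ Set.Ico (0:ℝ) (0+1) := (AddCircle.equivIco 1 0 x).2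
    have h4 : ((rep x + rep x + (rep x + rep x) : ℝ) : AddCircle (1:ℝ)) = 0 := by
      simp only [coe_add']
      rw [hr, hx]
    obtain ⟨n, hn⟩ := (AddCircle.coe_eq_zero_iff 1).mp h4
    have hn' : (n:ℝ) = 4 * rep x := by
      have := hn; rw [zsmul_eq_mul, mul_one] at this; linarith
    have h0 : 0 ≤ rep x := hmem.1
    have h1 : rep x < 1 := by simpa using hmem.2
    have hn0 : 0 ≤ n := by
      have : (0:ℝ) ≤ (n:ℝ) := by rw [hn']; linarith
      exact_mod_cast this
    have hn4 : n < 4 := by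
      have : (n:ℝ) < 4 := by rw [hn']; linarith
      exact_mod_cast this
    refine ⟨n.toNat, by omega, ?_⟩
    rw [← hr]
    congr 1
    have hrx : rep x = (n:ℝ)/4 := by linarith
    rw [hrx]
    congr 1
    exact_mod_cast (Int.toNat_of_nonneg hn0).symm
  -- 4a = 0 and 4b = 0
  have hB11 : Bpair (1,0) (1,0) = 0 := by unfold Bpair; norm_num
  have hB22 : Bpair (2,0) (2,0) = 0 := by
    unfold Bpair; norm_num [show ((2:ZMod 4)).val = 2 from rfl]
  have hB11' : Bpair (0,1) (0,1) = 0 := by unfold Bpair; norm_num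
  have hB22' : Bpair (0,2) (0,2) = 0 := by
    unfold Bpair; norm_num [show ((2:ZMod 4)).val = 2 from rfl]
  have h2a : Q (2,0) = Q (1,0) + Q (1,0) := by
    have := hadd (1,0) (1,0)
    rw [show ((1:ZMod 4),(0:ZMod 4)) + (1,0) = (2,0) by decide, hB11, add_zero] at this
    exact this
  have h4a : Q (1,0) + Q (1,0) + (Q (1,0) + Q (1,0)) = 0 := by
    have := hadd (2,0) (2,0)
    rw [show ((2:ZMod 4),(0:ZMod 4)) + (2,0) = 0 by decide, hB22, add_zero, hQ0, h2a] at this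
    exact this.symm
  have h2b : Q (0,2) = Q (0,1) + Q (0,1) := by
    have := hadd (0,1) (0,1)
    rw [show ((0:ZMod 4),(1:ZMod 4)) + (0,1) = (0,2) by decide, hB11', add_zero] at this
    exact this
  have h4b : Q (0,1) + Q (0,1) + (Q (0,1) + Q (0,1)) = 0 := by
    have := hadd (0,2) (0,2)
    rw [show ((0:ZMod 4),(2:ZMod 4)) + (0,2) = 0 by decide, hB22', add_zero, hQ0, h2b] at this
    exact this.symm
  obtain ⟨α, hα, hQa⟩ := quarter _ h4a
  obtain ⟨β, hβ, hQb⟩ := quarter _ h4b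
  -- powers along the axes
  have hB1 : ∀ c : ZMod 4, Bpair (c, 0) (1, 0) = 0 := by
    intro c; unfold Bpair; norm_num
  have hB2 : ∀ c : ZMod 4, Bpair (0, c) (0, 1) = 0 := by
    intro c; unfold Bpair; norm_num
  have hQn1 : ∀ n : ℕ, Q ((n : ZMod 4), 0) = ((((n*α : ℕ):ℝ)/4 : ℝ) : AddCircle (1:ℝ)) := by
    intro n
    induction n with
    | zero => simpa using (show Q ((0:ZMod 4),(0:ZMod 4)) = 0 from hQ0)
    | succ k ih =>
      have h := hadd ((k : ZMod 4), 0) (1, 0)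
      rw [hB1, add_zero] at h
      rw [show (((k+1:ℕ) : ZMod 4), (0:ZMod 4)) = ((k:ZMod 4), (0:ZMod 4)) + (1,0) by
        push_cast; rfl, h, ih, hQa]
      rw [show ((((k+1)*α : ℕ):ℝ)/4 : ℝ) = (((k*α:ℕ):ℝ)/4 : ℝ) + ((α:ℝ)/4 : ℝ) by
        push_cast; ring, coe_add']
  have hQn2 : ∀ n : ℕ, Q (0, (n : ZMod 4)) = ((((n*β : ℕ):ℝ)/4 : ℝ) : AddCircle (1:ℝ)) := by
    intro n
    induction n with
    | zero => simpa using (show Q ((0:ZMod 4),(0:ZMod 4)) = 0 from hQ0)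
    | succ k ih =>
      have h := hadd (0, (k : ZMod 4)) (0, 1)
      rw [hB2, add_zero] at h
      rw [show ((0:ZMod 4), ((k+1:ℕ) : ZMod 4)) = ((0:ZMod 4), (k:ZMod 4)) + (0,1) by
        push_cast; rfl, h, ih, hQb]
      rw [show ((((k+1)*β : ℕ):ℝ)/4 : ℝ) = (((k*β:ℕ):ℝ)/4 : ℝ) + ((β:ℝ)/4 : ℝ) by
        push_cast; ring, coe_add']
  -- general formula
  have hQv : ∀ v : ZMod 4 × ZMod 4,
      Q v = ((((v.1.val*α + v.2.val*β + v.1.val*v.2.val : ℕ):ℝ)/4 : ℝ) : AddCircle (1:ℝ)) := by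
    rintro ⟨x, y⟩
    have hx : ((x.val : ℕ) : ZMod 4) = x := ZMod.natCast_rightInverse x
    have hy : ((y.val : ℕ) : ZMod 4) = y := ZMod.natCast_rightInverse y
    have h := hadd (x, 0) (0, y)
    rw [show ((x:ZMod 4), (0:ZMod 4)) + (0, y) = (x, y) by simp] at h
    have hBxy : Bpair (x, 0) (0, y)
        = ((((x.val*y.val : ℕ):ℝ)/4 : ℝ) : AddCircle (1:ℝ)) := by
      unfold Bpair; norm_num
    have q1 := hQn1 x.val
    rw [hx] at q1
    have q2 := hQn2 y.val
    rw [hy] at q2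
    rw [h, hBxy, q1, q2]
    rw [show ((((x.val*α + y.val*β + x.val*y.val : ℕ):ℝ)/4 : ℝ))
      = (((x.val*α:ℕ):ℝ)/4) + (((y.val*β:ℕ):ℝ)/4) + (((x.val*y.val:ℕ):ℝ)/4) by
      push_cast; ring]
    rw [coe_add', coe_add']
  -- Gauss sum
  have hG : gaussSumQ Q = 4 * Complex.I ^ (((4-α)%4*β)%4) := by
    have : gaussSumQ Q = ∑ v : ZMod 4 × ZMod 4,
        Complex.I ^ ((v.1.val*α + v.2.val*β + v.1.val*v.2.val) % 4) := by
      refine Finset.sum_congr rfl fun v _ => ?_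
      calc Complex.exp (2 * (Real.pi : ℂ) * Complex.I * (rep (Q v) : ℂ))
          = ee ((((v.1.val*α + v.2.val*β + v.1.val*v.2.val : ℕ):ℝ)/4 : ℝ)) :=
            ee_congr (by rw [rep_coe, hQv])
        _ = Complex.I ^ ((v.1.val*α + v.2.val*β + v.1.val*v.2.val : ℕ)) := ee_quarter _
        _ = _ := I_pow_mod _
    rw [this, gauss_eval α β hα hβ]
  obtain ⟨k, hk, hGk⟩ : ∃ k, k < 4 ∧ gaussSumQ Q = 4 * Complex.I ^ k :=
    ⟨_, Nat.mod_lt _ (by norm_num), hG⟩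
  constructor
  · rw [hGk]
    exact mul_ne_zero (by norm_num) (pow_ne_zero _ Complex.I_ne_zero)
  · unfold arf
    rw [hGk]
    have hπ := Real.pi_ne_zero
    simp only [Set.mem_insert_iff, Set.mem_singleton_iff]
    interval_cases k
    · refine Or.inl ?_
      rw [show (4:ℂ) * Complex.I ^ 0 = ((4:ℝ):ℂ) * 1 by norm_num,
        Complex.arg_real_mul _ (by norm_num : (0:ℝ) < 4), Complex.arg_one, zero_div]
    · refine Or.inr (Or.inl ?_)
      rw [show (4:ℂ) * Complex.I ^ 1 = ((4:ℝ):ℂ) * Complex.I by norm_num,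
        Complex.arg_real_mul _ (by norm_num : (0:ℝ) < 4), Complex.arg_I,
        show (Real.pi/2)/(2*Real.pi) = (1/4 : ℝ) by field_simp; ring]
    · refine Or.inr (Or.inr (Or.inl ?_))
      rw [show (4:ℂ) * Complex.I ^ 2 = ((4:ℝ):ℂ) * (-1) by rw [Complex.I_sq]; norm_num,
        Complex.arg_real_mul _ (by norm_num : (0:ℝ) < 4), Complex.arg_neg_one,
        show Real.pi/(2*Real.pi) = (1/2 : ℝ) by field_simp]
    · refine Or.inr (Or.inr (Or.inr ?_))
      have h1 : ((1:ℝ) : AddCircle (1:ℝ)) = 0 := AddCircle.coe_period 1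
      rw [show (4:ℂ) * Complex.I ^ 3 = ((4:ℝ):ℂ) * (-Complex.I) by rw [I_cubed]; norm_num,
        Complex.arg_real_mul _ (by norm_num : (0:ℝ) < 4), Complex.arg_neg_I,
        show -(Real.pi/2)/(2*Real.pi) = (-(1/4) : ℝ) by field_simp; ring,
        show (3/4:ℝ) = -(1/4) + 1 by norm_num, coe_add', h1, add_zero]
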